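/- arXiv:2505.10981 — 2 statements merged into one kernel-verified Lean document; each statement's English description precedes it below -/
import Mathlib

section
/- Let p_max = max_j p_j and S = {j : p_j = p_max}. If 1 ∈ S and |S| > 1 (a 'moderate question'), then the majority-vote success probability Pr(a_1 | p; N) tends to 1/|S| as N → ∞. -/
open Finset Filter

/-- Number of the `N` samples in `ω` equal to answer `j`. -/
def count {m N : ℕ} (ω : Fin N → Fin m) (j : Fin m) : ℕ :=
  (Finset.univ.filter fun i => ω i = j).card

/-- The set `J(ω)` of answers achieving the maximal count among the samples `ω`. -/
def maxSet {m N : ℕ} (ω : Fin N → Fin m) : Finset (Fin m) :=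
  Finset.univ.filter fun j => ∀ k, count ω k ≤ count ω j

/-- Majority-vote probability that answer `l` is returned after `N` i.i.d. samples
drawn from `p`: the most frequent answer is chosen, ties broken uniformly. -/
noncomputable def majorityProb {m : ℕ} (p : Fin m → ℝ) (N : ℕ) (l : Fin m) : ℝ :=
  ∑ ω : Fin N → Fin m, (∏ i, p (ω i)) *
    (if l ∈ maxSet ω then (1 : ℝ) / ((maxSet ω).card : ℝ) else 0)

lemma mem_maxSet_iff {m N : ℕ} {ω : Fin N → Fin m} {j : Fin m} :
    j ∈ maxSet ω ↔ ∀ k, count ω k ≤ count ω j := by simp [maxSet]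

lemma count_comp {m N : ℕ} (σ : Equiv.Perm (Fin m)) (ω : Fin N → Fin m) (j : Fin m) :
    count (fun i => σ (ω i)) (σ j) = count ω j := by
  unfold count
  congr 1
  apply Finset.filter_congr
  intro i _
  simp [Equiv.apply_eq_iff_eq]

lemma mem_maxSet_comp {m N : ℕ} (σ : Equiv.Perm (Fin m)) (ω : Fin N → Fin m) (j : Fin m) :
    σ j ∈ maxSet (fun i => σ (ω i)) ↔ j ∈ maxSet ω := by
  simp only [mem_maxSet_iff]
  constructor
  · intro h k
    have := h (σ k)
    rwa [count_comp, count_comp] at this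
  · intro h k
    obtain ⟨k', rfl⟩ := σ.surjective k
    rw [count_comp, count_comp]
    exact h k'

lemma maxSet_comp_eq {m N : ℕ} (σ : Equiv.Perm (Fin m)) (ω : Fin N → Fin m) :
    maxSet (fun i => σ (ω i)) = (maxSet ω).image σ := by
  ext j
  obtain ⟨j', rfl⟩ := σ.surjective j
  rw [mem_maxSet_comp, σ.injective.mem_finset_image]

lemma maxSet_nonempty {m N : ℕ} (hm : 0 < m) (ω : Fin N → Fin m) : (maxSet ω).Nonempty := by
  obtain ⟨j, -, hj⟩ := Finset.exists_max_image (univ : Finset (Fin m)) (count ω)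
    ⟨⟨0, hm⟩, mem_univ _⟩
  exact ⟨j, mem_maxSet_iff.mpr fun k => hj k (mem_univ k)⟩

lemma majorityProb_comp {m N : ℕ} (p : Fin m → ℝ) (σ : Equiv.Perm (Fin m))
    (hp : ∀ j, p (σ j) = p j) (l : Fin m) :
    majorityProb p N (σ l) = majorityProb p N l := by
  unfold majorityProb
  rw [← Equiv.sum_comp (Equiv.arrowCongr (Equiv.refl (Fin N)) σ)]
  apply Finset.sum_congr rfl
  intro ω _
  have hω : (Equiv.arrowCongr (Equiv.refl (Fin N)) σ) ω = fun i => σ (ω i) := rfl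
  simp only [hω, maxSet_comp_eq, Finset.card_image_of_injective _ σ.injective,
    σ.injective.mem_finset_image]
  congr 1
  exact Finset.prod_congr rfl fun i _ => hp (ω i)

lemma sum_prod_eq_pow {m N : ℕ} (f : Fin m → ℝ) :
    ∑ ω : Fin N → Fin m, ∏ i, f (ω i) = (∑ j, f j) ^ N := by
  rw [← Fintype.piFinset_univ, ← Finset.prod_univ_sum]
  simp

lemma majorityProb_nonneg {m N : ℕ} (p : Fin m → ℝ) (hnn : ∀ j, 0 ≤ p j) (l : Fin m) :
    0 ≤ majorityProb p N l := by
  apply Finset.sum_nonneg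
  intro ω _
  apply mul_nonneg (Finset.prod_nonneg fun i _ => hnn (ω i))
  split_ifs <;> positivity

lemma sum_majorityProb {m : ℕ} (hm : 0 < m) (p : Fin m → ℝ) (hsum : ∑ j, p j = 1) (N : ℕ) :
    ∑ l, majorityProb p N l = 1 := by
  unfold majorityProb
  rw [Finset.sum_comm]
  have key : ∀ ω : Fin N → Fin m,
      (∑ l, (∏ i, p (ω i)) * (if l ∈ maxSet ω then (1:ℝ) / ((maxSet ω).card : ℝ) else 0))
        = ∏ i, p (ω i) := by
    intro ω
    rw [← Finset.mul_sum]
    have hc : ((maxSet ω).card : ℝ) ≠ 0 := by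
      have := (maxSet_nonempty hm ω).card_pos
      positivity
    have : (∑ l, (if l ∈ maxSet ω then (1:ℝ) / ((maxSet ω).card : ℝ) else 0)) = 1 := by
      rw [Finset.sum_ite_mem, Finset.univ_inter, Finset.sum_const, nsmul_eq_mul,
        mul_one_div, div_self hc]
    rw [this, mul_one]
  rw [Finset.sum_congr rfl fun ω _ => key ω, sum_prod_eq_pow, hsum, one_pow]

lemma prod_w {m N : ℕ} (z l : Fin m) (hlz : l ≠ z) (t : ℝ) (_ht0 : 0 < t)
    (ω : Fin N → Fin m) :
    (∏ i, (if ω i = l then t else if ω i = z then 1/t else 1))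
      = t ^ count ω l / t ^ count ω z := by
  rw [Finset.prod_ite, Finset.prod_const, Finset.prod_ite, Finset.prod_const,
    Finset.prod_const, Finset.filter_filter]
  have h1 : (Finset.univ.filter fun i => ¬ ω i = l ∧ ω i = z)
      = Finset.univ.filter fun i => ω i = z := by
    apply Finset.filter_congr
    intro i _
    constructor
    · exact fun h => h.2
    · intro h; exact ⟨fun h' => hlz (h' ▸ h ▸ rfl), h⟩
  rw [h1]
  unfold count
  rw [one_pow, mul_one, one_div, inv_pow, div_eq_mul_inv]

lemma majorityProb_le {m N : ℕ} (p : Fin m → ℝ) (hnn : ∀ j, 0 ≤ p j) (z l : Fin m)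
    (hlz : l ≠ z) (t : ℝ) (ht : 1 ≤ t) :
    majorityProb p N l ≤ (∑ j, p j * (if j = l then t else if j = z then 1/t else 1)) ^ N := by
  have ht0 : 0 < t := lt_of_lt_of_le one_pos ht
  rw [← sum_prod_eq_pow]
  unfold majorityProb
  apply Finset.sum_le_sum
  intro ω _
  rw [Finset.prod_mul_distrib]
  have hwp : (0:ℝ) ≤ ∏ i, (if ω i = l then t else if ω i = z then 1/t else 1) := by
    apply Finset.prod_nonneg
    intro i _
    split_ifs <;> positivity
  have hpnn : (0:ℝ) ≤ ∏ i, p (ω i) := Finset.prod_nonneg fun i _ => hnn (ω i)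
  split_ifs with h
  · apply mul_le_mul_of_nonneg_left _ hpnn
    have hcz : count ω z ≤ count ω l := mem_maxSet_iff.mp h z
    have h1 : (1:ℝ) ≤ ∏ i, (if ω i = l then t else if ω i = z then 1/t else 1) := by
      rw [prod_w z l hlz t ht0]
      rw [one_le_div (pow_pos ht0 _)]
      exact pow_le_pow_right₀ ht hcz
    have hcard : (1:ℝ) ≤ ((maxSet ω).card : ℝ) := by
      have : 0 < (maxSet ω).card := Finset.card_pos.mpr ⟨l, h⟩
      exact_mod_cast this
    calc (1:ℝ) / ((maxSet ω).card : ℝ) ≤ 1 := by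
          apply div_le_one_of_le₀ hcard
          linarith
      _ ≤ _ := h1
  · rw [mul_zero]
    exact mul_nonneg hpnn hwp

lemma sum_w {m : ℕ} (p : Fin m → ℝ) (hsum : ∑ j, p j = 1) (z l : Fin m) (hlz : l ≠ z)
    (t : ℝ) :
    (∑ j, p j * (if j = l then t else if j = z then 1/t else 1))
      = 1 + p l * (t - 1) + p z * (1/t - 1) := by
  have key : ∀ j, p j * (if j = l then t else if j = z then 1/t else 1)
      = p j + ((if j = l then p j * (t - 1) else 0) + (if j = z then p j * (1/t - 1) else 0)) := by
    intro j
    split_ifs with h1 h2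
    · exact absurd (h1.symm.trans h2) hlz
    · ring
    · ring
    · ring
  rw [Finset.sum_congr rfl fun j _ => key j, Finset.sum_add_distrib, Finset.sum_add_distrib,
    hsum, Finset.sum_ite_eq' univ l, Finset.sum_ite_eq' univ z]
  simp [add_assoc]

lemma r_lt_one (a q : ℝ) (ha : 0 ≤ a) (haq : a < q) :
    1 + a * (2*q/(q+a) - 1) + q * (1/(2*q/(q+a)) - 1) < 1 := by
  have hq : 0 < q := lt_of_le_of_lt ha haq
  have h1 : 0 < q + a := by linarith
  have h3 : 1/(2*q/(q+a)) = (q+a)/(2*q) := one_div_div _ _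
  rw [h3]
  have hne : q + a ≠ 0 := ne_of_gt h1
  have hne2 : (2:ℝ)*q ≠ 0 := by positivity
  have e1 : 2*q/(q+a) - 1 = (q-a)/(q+a) := by field_simp; ring
  have e2 : (q+a)/(2*q) - 1 = (a-q)/(2*q) := by field_simp; ring
  rw [e1, e2]
  have key : a * ((q-a)/(q+a)) + q * ((a-q)/(2*q)) < 0 := by
    rw [← mul_div_assoc, ← mul_div_assoc, div_add_div _ _ hne hne2, div_neg_iff]
    right
    constructor
    · nlinarith [mul_pos hq (mul_pos (sub_pos.mpr haq) (sub_pos.mpr haq))]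
    · positivity
  linarith

/-- For a moderate question (`a_1` is among the `|S| > 1` most likely
answers), the majority-vote success probability tends to `1/|S|` as `N → ∞`. -/
theorem moderate_question_tendsto_inv_card {m : ℕ} (hm : 0 < m) (p : Fin m → ℝ)
    (hnn : ∀ j, 0 ≤ p j) (hsum : ∑ j, p j = 1)
    (S : Finset (Fin m)) (hS : S = Finset.univ.filter fun j => ∀ k, p k ≤ p j)
    (hmem : (⟨0, hm⟩ : Fin m) ∈ S) (hcard : 1 < S.card) :
    Tendsto (fun N => majorityProb p N ⟨0, hm⟩) atTop (nhds (1 / (S.card : ℝ))) := by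
  set z : Fin m := ⟨0, hm⟩ with hzdef
  have hz : ∀ k, p k ≤ p z := by
    rw [hS, Finset.mem_filter] at hmem
    exact hmem.2
  have hq : 0 < p z := by
    by_contra h
    push_neg at h
    have hall : ∀ j, p j = 0 := fun j => le_antisymm (le_trans (hz j) h) (hnn j)
    have : (∑ j, p j) = 0 := Finset.sum_eq_zero fun j _ => hall j
    rw [hsum] at this
    norm_num at this
  have hcard0 : (0:ℝ) < (S.card : ℝ) := by
    have : 0 < S.card := lt_trans Nat.zero_lt_one hcard
    exact_mod_cast this
  -- symmetry
  have hsym : ∀ N : ℕ, ∀ l ∈ S, majorityProb p N l = majorityProb p N z := by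
    intro N l hl
    have hpl : p l = p z := by
      rw [hS, Finset.mem_filter] at hl
      exact le_antisymm (hz l) (hl.2 z)
    have hp : ∀ j, p ((Equiv.swap z l) j) = p j := by
      intro j
      rcases eq_or_ne j z with rfl | h1
      · rw [Equiv.swap_apply_left]; exact hpl
      rcases eq_or_ne j l with rfl | h2
      · rw [Equiv.swap_apply_right]; exact hpl.symm
      · rw [Equiv.swap_apply_of_ne_of_ne h1 h2]
    have := majorityProb_comp (N := N) p (Equiv.swap z l) hp l
    rw [Equiv.swap_apply_right] at this
    exact this.symm
  -- identity
  have hid : ∀ N : ℕ, majorityProb p N z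
      = (1 - ∑ l ∈ Sᶜ, majorityProb p N l) / (S.card : ℝ) := by
    intro N
    have h1 := sum_majorityProb hm p hsum N
    rw [← Finset.sum_add_sum_compl S] at h1
    have h2 : ∑ l ∈ S, majorityProb p N l = (S.card : ℝ) * majorityProb p N z := by
      rw [Finset.sum_congr rfl fun l hl => hsym N l hl, Finset.sum_const, nsmul_eq_mul]
    rw [h2] at h1
    field_simp
    linarith
  -- properties of l ∉ S
  have hlS : ∀ l ∈ Sᶜ, p l < p z := by
    intro l hl
    rw [Finset.mem_compl, hS, Finset.mem_filter] at hl
    push_neg at hl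
    obtain ⟨k, hk⟩ := hl (Finset.mem_univ l)
    exact lt_of_lt_of_le hk (hz k)
  have hlne : ∀ l ∈ Sᶜ, l ≠ z := by
    intro l hl h
    exact (Finset.mem_compl.mp hl) (h ▸ hmem)
  -- define the rates
  set r : Fin m → ℝ := fun l =>
    1 + p l * (2 * p z / (p z + p l) - 1) + p z * (1 / (2 * p z / (p z + p l)) - 1) with hrdef
  have hden : ∀ l, 0 < p z + p l := fun l => lt_of_lt_of_le hq (by linarith [hnn l])
  have ht1 : ∀ l ∈ Sᶜ, 1 ≤ 2 * p z / (p z + p l) := by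
    intro l hl
    rw [one_le_div (hden l)]
    linarith [hlS l hl]
  have hbound : ∀ N : ℕ, ∀ l ∈ Sᶜ, majorityProb p N l ≤ (r l) ^ N := by
    intro N l hl
    have := majorityProb_le (N := N) p hnn z l (hlne l hl) (2 * p z / (p z + p l)) (ht1 l hl)
    rwa [sum_w p hsum z l (hlne l hl)] at this
  have hr0 : ∀ l ∈ Sᶜ, 0 ≤ r l := by
    intro l hl
    have := sum_w p hsum z l (hlne l hl) (2 * p z / (p z + p l))
    rw [hrdef]
    simp only
    rw [← this]
    apply Finset.sum_nonneg
    intro j _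
    apply mul_nonneg (hnn j)
    have h0 : (0:ℝ) < 2 * p z / (p z + p l) := lt_of_lt_of_le one_pos (ht1 l hl)
    split_ifs <;> positivity
  have hr1 : ∀ l ∈ Sᶜ, r l < 1 := fun l hl => r_lt_one (p l) (p z) (hnn l) (hlS l hl)
  -- tail tends to zero
  have htail : Tendsto (fun N => ∑ l ∈ Sᶜ, majorityProb p N l) atTop (nhds 0) := by
    apply squeeze_zero
    · intro N
      exact Finset.sum_nonneg fun l _ => majorityProb_nonneg p hnn l
    · intro N
      exact Finset.sum_le_sum fun l hl => hbound N l hl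
    · have := tendsto_finset_sum (Sᶜ) fun l (hl : l ∈ Sᶜ) =>
        tendsto_pow_atTop_nhds_zero_of_lt_one (hr0 l hl) (hr1 l hl)
      simpa using this
  have hfinal : Tendsto (fun N => (1 - ∑ l ∈ Sᶜ, majorityProb p N l) / (S.card : ℝ))
      atTop (nhds ((1 - 0) / (S.card : ℝ))) :=
    (tendsto_const_nhds.sub htail).div_const _
  rw [sub_zero] at hfinal
  exact hfinal.congr fun N => (hid N).symm
end

section
/- If p_1 > p_j for every j ≠ 1, then the probability that answer a_1 achieves a strict plurality among N i.i.d. samples, Pr(X_1(ω) > X_j(ω) for all j ≠ 1), tends to 1 as N → ∞. -/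
open Finset Filter

lemma prod_comp_count {m N : ℕ} (ω : Fin N → Fin m) (r : Fin m → ℝ) :
    ∏ i, r (ω i) = ∏ k, r k ^ count ω k := by
  rw [← Finset.prod_fiberwise_of_maps_to (fun x _ => Finset.mem_univ (ω x))
      (fun x => r (ω x))]
  refine Finset.prod_congr rfl fun k _ => ?_
  rw [count, ← Finset.prod_const]
  exact Finset.prod_congr rfl fun i hi => by rw [(Finset.mem_filter.mp hi).2]

/-- Chernoff-type bound. -/
lemma chernoff {m : ℕ} (p : Fin m → ℝ) (hnn : ∀ j, 0 ≤ p j) (hsum : ∑ j, p j = 1)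
    (i0 j : Fin m) (hj : j ≠ i0) (hlt : p j < p i0) :
    ∃ c : ℝ, 0 ≤ c ∧ c < 1 ∧ ∀ N : ℕ,
      (∑ ω : Fin N → Fin m,
        if count ω i0 ≤ count ω j then ∏ i, p (ω i) else 0) ≤ c ^ N := by
  classical
  set a := p i0 with ha'
  set b := p j with hb'
  have hb : 0 ≤ b := hnn j
  have ha : 0 < a := lt_of_le_of_lt hb hlt
  have hab : 0 < a + b := by linarith
  set t : ℝ := 2 * a / (a + b) with ht'
  have ht1 : 1 < t := by
    rw [ht', lt_div_iff₀ hab]; linarith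
  have ht0 : 0 < t := lt_trans one_pos ht1
  set r : Fin m → ℝ := fun k => if k = i0 then 1 / t else if k = j then t else 1 with hr'
  set c : ℝ := ∑ k, p k * r k with hc'
  have hrnn : ∀ k, 0 ≤ r k := by
    intro k; rw [hr']; dsimp only
    split_ifs <;> positivity
  have hcnn : 0 ≤ c := Finset.sum_nonneg fun k _ => mul_nonneg (hnn k) (hrnn k)
  have hc1 : c < 1 := by
    have : c - 1 = ∑ k, p k * (r k - 1) := by
      refine Eq.symm ?_
      calc ∑ k, p k * (r k - 1) = ∑ k, (p k * r k - p k) :=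
            Finset.sum_congr rfl fun k _ => by ring
        _ = (∑ k, p k * r k) - ∑ k, p k := Finset.sum_sub_distrib _ _
        _ = c - 1 := by rw [hsum, hc']
    have h2 : ∀ k, p k * (r k - 1) =
        (if k = i0 then a * (1 / t - 1) else 0) + (if k = j then b * (t - 1) else 0) := by
      intro k
      rw [hr']; dsimp only
      by_cases h1 : k = i0
      · subst h1; rw [if_pos rfl, if_pos rfl, if_neg (Ne.symm hj)]; ring
      · rw [if_neg h1, if_neg h1]
        by_cases h2 : k = j
        · subst h2; rw [if_pos rfl, if_pos rfl]; ring
        · rw [if_neg h2, if_neg h2]; ring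
    have h3 : c - 1 = a * (1 / t - 1) + b * (t - 1) := by
      rw [this, Finset.sum_congr rfl fun k _ => h2 k, Finset.sum_add_distrib,
        Finset.sum_ite_eq' Finset.univ i0 (fun _ => a * (1 / t - 1)),
        Finset.sum_ite_eq' Finset.univ j (fun _ => b * (t - 1))]
      simp
    have h4 : a * (1 / t - 1) + b * (t - 1) < 0 := by
      rw [ht']
      have h5 : (a + b) ≠ 0 := ne_of_gt hab
      have h6 : (2 : ℝ) * a ≠ 0 := by positivity
      field_simp
      nlinarith [pow_pos (sub_pos.mpr hlt) 2]
    linarith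
  refine ⟨c, hcnn, hc1, fun N => ?_⟩
  have key : ∀ ω : Fin N → Fin m,
      (if count ω i0 ≤ count ω j then ∏ i, p (ω i) else 0) ≤ ∏ i, p (ω i) * r (ω i) := by
    intro ω
    have hgnn : 0 ≤ ∏ i, p (ω i) * r (ω i) :=
      Finset.prod_nonneg fun i _ => mul_nonneg (hnn _) (hrnn _)
    split_ifs with h
    · have hpr : ∏ i, p (ω i) * r (ω i) = (∏ i, p (ω i)) * ∏ i, r (ω i) :=
        Finset.prod_mul_distrib
      have hrprod : (1 : ℝ) ≤ ∏ i, r (ω i) := by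
        rw [prod_comp_count]
        have hsub : ({i0, j} : Finset (Fin m)) ⊆ Finset.univ := Finset.subset_univ _
        rw [← Finset.prod_subset hsub (fun k _ hk => ?_)]
        · rw [Finset.prod_pair (Ne.symm hj)]
          rw [hr']; dsimp only
          rw [if_pos rfl, if_neg hj, if_pos rfl]
          rw [div_pow, one_pow]
          rw [div_mul_eq_mul_div, one_mul, le_div_iff₀ (pow_pos ht0 _), one_mul]
          exact pow_le_pow_right₀ (le_of_lt ht1) h
        · simp only [Finset.mem_insert, Finset.mem_singleton, not_or] at hk
          rw [hr']; dsimp only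
          rw [if_neg hk.1, if_neg hk.2, one_pow]
      calc ∏ i, p (ω i) = (∏ i, p (ω i)) * 1 := by ring
        _ ≤ (∏ i, p (ω i)) * ∏ i, r (ω i) :=
            mul_le_mul_of_nonneg_left hrprod (Finset.prod_nonneg fun i _ => hnn _)
        _ = ∏ i, p (ω i) * r (ω i) := hpr.symm
    · exact hgnn
  calc (∑ ω : Fin N → Fin m, if count ω i0 ≤ count ω j then ∏ i, p (ω i) else 0)
      ≤ ∑ ω : Fin N → Fin m, ∏ i, p (ω i) * r (ω i) :=
        Finset.sum_le_sum fun ω _ => key ω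
    _ = c ^ N := by rw [hc', Fintype.sum_pow (fun k => p k * r k) N]

/-- If `a₁` is the unique most likely answer, the probability that it
achieves a strict plurality among `N` i.i.d. samples tends to `1` as `N → ∞`. -/
theorem strict_plurality_tendsto_one {m : ℕ} (hm : 0 < m) (p : Fin m → ℝ)
    (hnn : ∀ j, 0 ≤ p j) (hsum : ∑ j, p j = 1)
    (heasy : ∀ j, j ≠ (⟨0, hm⟩ : Fin m) → p j < p ⟨0, hm⟩) :
    Tendsto
      (fun N => ∑ ω : Fin N → Fin m,
        if ∀ j, j ≠ (⟨0, hm⟩ : Fin m) → count ω j < count ω ⟨0, hm⟩ then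
          ∏ i, p (ω i) else 0)
      atTop (nhds 1) := by
  classical
  set i0 : Fin m := ⟨0, hm⟩ with hi0
  have hex : ∀ j : Fin m, ∃ c : ℝ, 0 ≤ c ∧ c < 1 ∧ (j ≠ i0 → ∀ N : ℕ,
      (∑ ω : Fin N → Fin m,
        if count ω i0 ≤ count ω j then ∏ i, p (ω i) else 0) ≤ c ^ N) := by
    intro j
    by_cases hj : j ≠ i0
    · obtain ⟨c, h0, h1, hb⟩ := chernoff p hnn hsum i0 j hj (heasy j hj)
      exact ⟨c, h0, h1, fun _ => hb⟩
    · exact ⟨0, le_refl 0, one_pos, fun h => absurd h hj⟩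
  choose c hc0 hc1 hcb using hex
  set S : ℕ → ℝ := fun N => ∑ ω : Fin N → Fin m,
    if ∀ j, j ≠ i0 → count ω j < count ω i0 then ∏ i, p (ω i) else 0 with hS
  have htot : ∀ N : ℕ, ∑ ω : Fin N → Fin m, ∏ i, p (ω i) = 1 := by
    intro N
    rw [← Fintype.sum_pow p N, hsum, one_pow]
  have hS_le : ∀ N, S N ≤ 1 := by
    intro N
    rw [hS, ← htot N]
    refine Finset.sum_le_sum fun ω _ => ?_
    split_ifs
    · exact le_refl _
    · exact Finset.prod_nonneg fun i _ => hnn _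
  have hS_ge : ∀ N, 1 - (∑ j ∈ Finset.univ.filter (· ≠ i0), c j ^ N) ≤ S N := by
    intro N
    rw [sub_le_iff_le_add]
    have hsplit : (1 : ℝ) = S N + ∑ ω : Fin N → Fin m,
        if ¬ (∀ j, j ≠ i0 → count ω j < count ω i0) then ∏ i, p (ω i) else 0 := by
      rw [hS, ← Finset.sum_add_distrib, ← htot N]
      refine Finset.sum_congr rfl fun ω _ => ?_
      by_cases h : ∀ j, j ≠ i0 → count ω j < count ω i0
      · rw [if_pos h, if_neg (not_not_intro h), add_zero]
      · rw [if_neg h, if_pos h, zero_add]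
    have hbound : (∑ ω : Fin N → Fin m,
        if ¬ (∀ j, j ≠ i0 → count ω j < count ω i0) then ∏ i, p (ω i) else 0)
        ≤ ∑ j ∈ Finset.univ.filter (· ≠ i0), c j ^ N := by
      calc (∑ ω : Fin N → Fin m,
          if ¬ (∀ j, j ≠ i0 → count ω j < count ω i0) then ∏ i, p (ω i) else 0)
          ≤ ∑ ω : Fin N → Fin m, ∑ j ∈ Finset.univ.filter (· ≠ i0),
              (if count ω i0 ≤ count ω j then ∏ i, p (ω i) else 0) := by
            refine Finset.sum_le_sum fun ω _ => ?_
            by_cases h : ∀ j, j ≠ i0 → count ω j < count ω i0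
            · rw [if_neg (not_not_intro h)]
              refine Finset.sum_nonneg fun k _ => ?_
              split_ifs
              · exact Finset.prod_nonneg fun i _ => hnn _
              · exact le_refl 0
            · rw [if_pos h]
              push_neg at h
              obtain ⟨j, hj, hcj⟩ := h
              have hmem : j ∈ Finset.univ.filter (· ≠ i0) := by
                simp [hj]
              have := Finset.single_le_sum
                (f := fun j => if count ω i0 ≤ count ω j then ∏ i, p (ω i) else 0)
                (fun k _ => by
                  split_ifs
                  · exact Finset.prod_nonneg fun i _ => hnn _
                  · exact le_refl 0) hmem
              rwa [if_pos hcj] at this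
        _ = ∑ j ∈ Finset.univ.filter (· ≠ i0), ∑ ω : Fin N → Fin m,
              (if count ω i0 ≤ count ω j then ∏ i, p (ω i) else 0) :=
            Finset.sum_comm
        _ ≤ ∑ j ∈ Finset.univ.filter (· ≠ i0), c j ^ N := by
            refine Finset.sum_le_sum fun j hj => ?_
            exact hcb j (Finset.mem_filter.mp hj).2 N
    calc (1 : ℝ) = S N + _ := hsplit
      _ ≤ S N + ∑ j ∈ Finset.univ.filter (· ≠ i0), c j ^ N := by linarith [hbound]
  have hzero : Tendsto (fun N => ∑ j ∈ Finset.univ.filter (· ≠ i0), c j ^ N)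
      atTop (nhds 0) := by
    have := tendsto_finset_sum (Finset.univ.filter (· ≠ i0))
      (fun j _ => tendsto_pow_atTop_nhds_zero_of_lt_one (hc0 j) (hc1 j))
    simpa using this
  have hlow : Tendsto (fun N => 1 - ∑ j ∈ Finset.univ.filter (· ≠ i0), c j ^ N)
      atTop (nhds 1) := by
    have h1 : Tendsto (fun _ : ℕ => (1 : ℝ)) atTop (nhds 1) := tendsto_const_nhds
    simpa using h1.sub hzero
  exact tendsto_of_tendsto_of_tendsto_of_le_of_le hlow tendsto_const_nhds hS_ge hS_le
end
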